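/- Let X be an n×n real matrix with XᵀX = Iₙ (orthonormal), let y ∈ ℝⁿ with y ≠ 0, and for λ ≥ 0 define L(α) = ‖y − Xα‖₂ + λ‖α‖₂ for α ∈ ℝⁿ. Then the least squares solution α = Xᵀy is a global minimizer of L if and only if λ ≤ 1. -/
import Mathlib


open scoped BigOperators Matrix

/-- Euclidean norm of a vector in `ℝᵐ`. -/
noncomputable def norm2 {m : ℕ} (v : Fin m → ℝ) : ℝ := Real.sqrt (∑ i, (v i) ^ 2)

/-- The square-root group-LASSO objective with orthonormal design:
`L(α) = ‖y − Xα‖₂ + λ‖α‖₂`. -/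
noncomputable def sqrtGroupLassoObj {n : ℕ} (X : Matrix (Fin n) (Fin n) ℝ)
    (y : Fin n → ℝ) (lam : ℝ) (α : Fin n → ℝ) : ℝ :=
  norm2 (y - X.mulVec α) + lam * norm2 α

lemma norm2_eq {m : ℕ} (v : Fin m → ℝ) :
    norm2 v = ‖(WithLp.equiv 2 (Fin m → ℝ)).symm v‖ := by
  rw [EuclideanSpace.norm_eq]
  simp [norm2, Real.norm_eq_abs, sq_abs]

lemma norm2_nonneg {m : ℕ} (v : Fin m → ℝ) : 0 ≤ norm2 v := Real.sqrt_nonneg _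

lemma norm2_zero {m : ℕ} : norm2 (0 : Fin m → ℝ) = 0 := by
  simp [norm2]

lemma norm2_pos {m : ℕ} {v : Fin m → ℝ} (hv : v ≠ 0) : 0 < norm2 v := by
  rw [norm2_eq, norm_pos_iff]
  simpa using hv

lemma norm2_triangle {m : ℕ} (a b : Fin m → ℝ) :
    norm2 (a + b) ≤ norm2 a + norm2 b := by
  simp only [norm2_eq]
  have : (WithLp.equiv 2 (Fin m → ℝ)).symm (a + b)
      = (WithLp.equiv 2 (Fin m → ℝ)).symm a + (WithLp.equiv 2 (Fin m → ℝ)).symm b := rfl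
  rw [this]
  exact norm_add_le _ _

lemma norm2_mulVec {m : ℕ} (X : Matrix (Fin m) (Fin m) ℝ)
    (hX : X.transpose * X = 1) (v : Fin m → ℝ) :
    norm2 (X.mulVec v) = norm2 v := by
  unfold norm2
  congr 1
  have h1 : ∀ w : Fin m → ℝ, ∑ i, (w i) ^ 2 = w ⬝ᵥ w := by
    intro w; simp [dotProduct, sq]
  rw [h1, h1, Matrix.dotProduct_mulVec, ← Matrix.mulVec_transpose,
    Matrix.mulVec_mulVec, hX, Matrix.one_mulVec]

/-- With orthonormal design `XᵀX = Iₙ` and `y ≠ 0`, the least squares solution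
`α = Xᵀy` is a global minimizer of `L(α) = ‖y − Xα‖₂ + λ‖α‖₂` iff `λ ≤ 1`. -/
theorem leastSquares_isMinimizer_iff {n : ℕ} (X : Matrix (Fin n) (Fin n) ℝ)
    (hX : X.transpose * X = 1) (y : Fin n → ℝ) (hy : y ≠ 0)
    (lam : ℝ) (hlam : 0 ≤ lam) :
    (∀ α : Fin n → ℝ,
        sqrtGroupLassoObj X y lam (X.transpose.mulVec y) ≤ sqrtGroupLassoObj X y lam α) ↔
      lam ≤ 1 := by
  have hX' : X * X.transpose = 1 := mul_eq_one_comm.mp hX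
  have hXXt : X.mulVec (X.transpose.mulVec y) = y := by
    rw [Matrix.mulVec_mulVec, hX', Matrix.one_mulVec]
  have hnormXt : norm2 (X.transpose.mulVec y) = norm2 y := by
    have : X.transpose.transpose * X.transpose = 1 := by
      rw [Matrix.transpose_transpose]; exact hX'
    exact norm2_mulVec X.transpose this y
  constructor
  · intro h
    have h0 := h 0
    simp only [sqrtGroupLassoObj, Matrix.mulVec_zero, sub_zero, norm2_zero, mul_zero,
      add_zero, hXXt, sub_self, norm2_zero, zero_add, hnormXt] at h0
    have hpos : 0 < norm2 y := norm2_pos hy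
    nlinarith
  · intro hl α
    have key : y - X.mulVec α = X.mulVec (X.transpose.mulVec y - α) := by
      rw [Matrix.mulVec_sub, hXXt]
    have hXss : X.transpose * X = 1 := hX
    rw [sqrtGroupLassoObj, sqrtGroupLassoObj, key, norm2_mulVec X hX, hXXt, sub_self,
      norm2_zero, zero_add, hnormXt]
    set c := X.transpose.mulVec y with hc
    have htri : norm2 c ≤ norm2 (c - α) + norm2 α := by
      have := norm2_triangle (c - α) α
      simpa using this
    have h1 : lam * norm2 c ≤ lam * (norm2 (c - α) + norm2 α) :=
      mul_le_mul_of_nonneg_left htri hlam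
    have h2 : lam * norm2 (c - α) ≤ norm2 (c - α) :=
      mul_le_of_le_one_left (norm2_nonneg _) hl
    have hcy : norm2 c = norm2 y := hnormXt
    nlinarith [norm2_nonneg (c - α), norm2_nonneg α]
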